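/- Let w₁, w₂ : E → R be weight functions and for λ ∈ [0,1] let w^{(λ)} = (1−λ)w₁ + λw₂. Fix c ∈ [0,1] and b ∈ [0,1] with c < b, and suppose for all λ ∈ [c, b) and all i ≠ j, w^{(λ)}(i) = w^{(λ)}(j) implies w₁(i) = w₁(j) and w₂(i) = w₂(j). Then any permutation sorting w^{(c)} in non-decreasing order also sorts w^{(b)} in non-decreasing order, except possibly among elements sharing equal w^{(b)} value. -/

import Mathlib

/-- if on the interval `[c, b)` ties in the scalarized weight
`w^{(λ)} = (1−λ)w₁ + λw₂` only occur between elements with identical weight vectors,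
then any permutation sorting `w^{(c)}` in non-decreasing order also sorts `w^{(b)}`. -/
theorem sorting_permutation_transfers
    (m : ℕ) (w₁ w₂ : Fin m → ℝ)
    (c b : ℝ) (hc : 0 ≤ c) (hcb : c < b) (hb : b ≤ 1)
    (hsep : ∀ lam ∈ Set.Ico c b, ∀ i j : Fin m,
      (1 - lam) * w₁ i + lam * w₂ i = (1 - lam) * w₁ j + lam * w₂ j →
      w₁ i = w₁ j ∧ w₂ i = w₂ j)
    (τ : Equiv.Perm (Fin m))
    (hsort : ∀ i j : Fin m, i ≤ j →
      (1 - c) * w₁ (τ i) + c * w₂ (τ i) ≤ (1 - c) * w₁ (τ j) + c * w₂ (τ j)) :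
    ∀ i j : Fin m, i ≤ j →
      (1 - b) * w₁ (τ i) + b * w₂ (τ i) ≤ (1 - b) * w₁ (τ j) + b * w₂ (τ j) := by
  intro i j hij
  by_contra hlt
  push_neg at hlt
  set A : ℝ := w₁ (τ j) - w₁ (τ i) with hA
  set B : ℝ := w₂ (τ j) - w₂ (τ i) with hB
  have hfc : 0 ≤ A + c * (B - A) := by
    have := hsort i j hij; nlinarith [this]
  have hfb : A + b * (B - A) < 0 := by nlinarith [hlt]
  have hD : B - A < 0 := by nlinarith [hfc, hfb, hcb]
  set lam : ℝ := c - (A + c * (B - A)) / (B - A) with hlam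
  have hlam1 : c ≤ lam := by
    have : (A + c * (B - A)) / (B - A) ≤ 0 :=
      div_nonpos_of_nonneg_of_nonpos hfc (le_of_lt hD)
    simp [hlam]; linarith
  have hlam2 : lam < b := by
    have key : ((A + c * (B - A)) / (B - A)) * (B - A) = A + c * (B - A) :=
      div_mul_cancel₀ _ (ne_of_lt hD)
    rw [hlam, sub_lt_iff_lt_add]
    nlinarith [key, hfb, hD]
  have hzero : (1 - lam) * w₁ (τ j) + lam * w₂ (τ j)
      = (1 - lam) * w₁ (τ i) + lam * w₂ (τ i) := by
    have hD' : B - A ≠ 0 := ne_of_lt hD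
    have : A + lam * (B - A) = 0 := by
      rw [hlam]; field_simp; ring
    nlinarith [this]
  obtain ⟨h1, h2⟩ := hsep lam ⟨hlam1, hlam2⟩ (τ j) (τ i) hzero
  nlinarith [hfb, h1, h2]
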